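/- The softmax probability of the maximizing index, u_{n*}(τ) = exp(s_{n*}/τ)/∑_m exp(s_m/τ) where s_{n*} = max_m s_m, is monotonically non-increasing in τ > 0. -/
import Mathlib


theorem softmax_max_prob_antitone_in_temperature
    {N : ℕ} (s : Fin N → ℝ) (nstar : Fin N) (hmax : ∀ m, s m ≤ s nstar) :
    AntitoneOn (fun τ : ℝ => Real.exp (s nstar / τ) / ∑ m, Real.exp (s m / τ))
      (Set.Ioi 0) := by
  intro a ha b hb hab
  simp only [Set.mem_Ioi] at ha hb
  have hsa : (0:ℝ) < ∑ m, Real.exp (s m / a) :=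
    Finset.sum_pos (fun m _ => Real.exp_pos _) ⟨nstar, Finset.mem_univ _⟩
  have hsb : (0:ℝ) < ∑ m, Real.exp (s m / b) :=
    Finset.sum_pos (fun m _ => Real.exp_pos _) ⟨nstar, Finset.mem_univ _⟩
  rw [div_le_div_iff₀ hsb hsa]
  rw [Finset.mul_sum, Finset.mul_sum]
  apply Finset.sum_le_sum
  intro m _
  rw [← Real.exp_add, ← Real.exp_add, Real.exp_le_exp]
  have h1 : s nstar / b - s m / b ≤ s nstar / a - s m / a := by
    rw [div_sub_div_same, div_sub_div_same]
    exact div_le_div_of_nonneg_left (by linarith [hmax m]) ha hab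
  linarith
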